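/- For every finitely generated abelian group F, every element u ∈ F, and every s ∈ {−1, 0, 1} such that s = 0 if and only if F is infinite, there exists a square matrix A with nonnegative integer entries, irreducible (i.e. for all indices i, j there exists m ≥ 1 with (A^m)(i,j) > 0), such that ℤ^n/(I − Aᵗ)ℤ^n ≅ F via an isomorphism carrying the class of the all-ones vector to u, and the sign of det(I − A) equals s. -/

import Mathlib

open Matrix

open Submodule Set

lemma lemA (F : Type) [AddCommGroup F] [AddGroup.FG F] (u : F) :
    ∃ (N : ℕ) (L : Fin (N + 1) → F),
      Submodule.span ℤ (Set.range L) = ⊤ ∧ (∑ j, L j) = u ∧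
      ∃ x : Fin (N + 1) → ℤ, (∀ j, x j ≤ -1) ∧ (∑ j, x j • L j) = 0 := by
  haveI : Module.Finite ℤ F := Module.Finite.iff_addGroup_fg.mpr inferInstance
  obtain ⟨m, f, hf⟩ := Module.Finite.exists_fin (R := ℤ) (M := F)
  have hu : u ∈ Submodule.span ℤ (Set.range f) := hf ▸ Submodule.mem_top
  obtain ⟨c, hc⟩ := (mem_span_range_iff_exists_fun ℤ).mp hu
  set Kc : ℤ := 1 + ∑ i, |c i| with hKc
  have hKge : ∀ i, c i - Kc ≤ -1 := by
    intro i
    have h1 : |c i| ≤ ∑ j, |c j| :=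
      Finset.single_le_sum (fun j _ => abs_nonneg (c j)) (Finset.mem_univ i)
    have h2 : c i ≤ |c i| := le_abs_self _
    omega
  -- index type
  let Lι : (Fin m ⊕ Fin m) ⊕ Unit → F := Sum.elim (Sum.elim f (fun i => -f i)) (fun _ => u)
  let xι : (Fin m ⊕ Fin m) ⊕ Unit → ℤ := Sum.elim (Sum.elim (fun i => c i - Kc) (fun _ => -Kc)) (fun _ => -1)
  have hcard : Fintype.card ((Fin m ⊕ Fin m) ⊕ Unit) = (m + m) + 1 := by simp
  obtain ⟨e⟩ : Nonempty (((Fin m ⊕ Fin m) ⊕ Unit) ≃ Fin ((m + m) + 1)) := ⟨Fintype.equivFinOfCardEq hcard⟩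
  refine ⟨m + m, Lι ∘ e.symm, ?_, ?_, xι ∘ e.symm, fun j => ?_, ?_⟩
  · rw [e.symm.surjective.range_comp]
    rw [eq_top_iff, ← hf]
    apply Submodule.span_mono
    rintro _ ⟨i, rfl⟩
    exact ⟨Sum.inl (Sum.inl i), rfl⟩
  · simp only [Function.comp]
    rw [Equiv.sum_comp e.symm Lι]
    simp only [Lι, Fintype.sum_sum_type, Sum.elim_inl, Sum.elim_inr,
      Finset.univ_unique, Finset.sum_const, Finset.card_singleton, one_smul,
      Finset.sum_neg_distrib]
    abel
  · simp only [Function.comp]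
    have hK1 : 1 ≤ Kc := by
      have : (0:ℤ) ≤ ∑ i, |c i| := Finset.sum_nonneg (fun i _ => abs_nonneg _)
      omega
    rcases e.symm j with (i | i) | i
    · exact hKge i
    · simp only [xι, Sum.elim_inl, Sum.elim_inr]; omega
    · simp [xι]
  · simp only [Function.comp]
    rw [Equiv.sum_comp e.symm (fun i => xι i • Lι i)]
    simp only [xι, Lι, Fintype.sum_sum_type, Sum.elim_inl, Sum.elim_inr,
      Finset.univ_unique, Finset.sum_singleton, sub_smul, smul_neg, neg_smul,
      Finset.sum_sub_distrib, neg_neg, one_smul]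
    rw [hc]
    abel

lemma span_update_neg {N : ℕ} (g : Fin N → (Fin N → ℤ)) (j0 : Fin N) :
    span ℤ (range (Function.update g j0 (-(g j0)))) = span ℤ (range g) := by
  apply le_antisymm <;> rw [span_le] <;> rintro _ ⟨j, rfl⟩
  · rcases eq_or_ne j j0 with rfl | hj
    · rw [Function.update_self]
      exact neg_mem (subset_span ⟨j, rfl⟩)
    · rw [Function.update_of_ne hj]
      exact subset_span ⟨j, rfl⟩
  · rcases eq_or_ne j j0 with rfl | hj
    · have hmem : Function.update g j (-(g j)) j ∈
          span ℤ (range (Function.update g j (-(g j)))) := subset_span ⟨j, rfl⟩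
      have := neg_mem hmem
      simpa using this
    · have hmem : Function.update g j0 (-(g j0)) j ∈
          span ℤ (range (Function.update g j0 (-(g j0)))) := subset_span ⟨j, rfl⟩
      simpa [Function.update_of_ne hj] using hmem

lemma span_range_coe_basis {N k : ℕ} (K : Submodule ℤ (Fin N → ℤ)) (b : Module.Basis (Fin k) ℤ K) :
    span ℤ (range (fun j => (b j : Fin N → ℤ))) = K := by
  have h1 : (fun j => (b j : Fin N → ℤ)) = K.subtype ∘ b := rfl
  rw [h1, Set.range_comp, ← Submodule.map_span, b.span_eq, Submodule.map_top,
    Submodule.range_subtype]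

lemma mulVec_mem_of_cols {N k : ℕ} (K : Submodule ℤ (Fin N → ℤ)) (g : Fin k → (Fin N → ℤ))
    (hg : ∀ j, g j ∈ K) (c : Fin k → ℤ) :
    (Matrix.of fun i j => g j i) *ᵥ c ∈ K := by
  have h : (Matrix.of fun i j => g j i) *ᵥ c = ∑ j, c j • g j := by
    funext i
    simp [Matrix.mulVec, dotProduct, Finset.sum_apply, mul_comm]
  rw [h]
  exact Submodule.sum_mem _ fun j _ => Submodule.smul_mem _ _ (hg j)

lemma lemB (N : ℕ) (hN : 0 < N) (K : Submodule ℤ (Fin N → ℤ)) (s : ℤ)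
    (hs : s = -1 ∨ s = 0 ∨ s = 1)
    (hsK : s = 0 ↔ Infinite ((Fin N → ℤ) ⧸ K)) :
    ∃ g : Fin N → (Fin N → ℤ), span ℤ (range g) = K ∧
      (Matrix.of fun i j => g j i).det.sign = -s := by
  obtain ⟨k, b⟩ := Submodule.basisOfPid (Pi.basisFun ℤ (Fin N)) K
  haveI : Module.Finite ℤ K := Module.Finite.iff_fg.mpr (IsNoetherian.noetherian K)
  have hkN : k ≤ N := by
    have h1 : Module.finrank ℤ K = k := by
      rw [Module.finrank_eq_card_basis b, Fintype.card_fin]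
    have h2 : Module.finrank ℤ K ≤ Module.finrank ℤ (Fin N → ℤ) := K.finrank_le
    simpa [h1, Module.finrank_fintype_fun_eq_card] using h2
  by_cases hk : k = N
  · -- full rank case
    let b' : Module.Basis (Fin N) ℤ K := b.reindex (finCongr hk)
    set g₀ : Fin N → (Fin N → ℤ) := fun j => (b' j : Fin N → ℤ) with hg₀
    set G₀ : Matrix (Fin N) (Fin N) ℤ := Matrix.of fun i j => g₀ j i with hG₀
    have hg₀K : ∀ j, g₀ j ∈ K := fun j => (b' j).2
    have hspan₀ : span ℤ (range g₀) = K := span_range_coe_basis K b'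
    have hli : LinearIndependent ℤ g₀ :=
      b'.linearIndependent.map' K.subtype (Submodule.ker_subtype K)
    have hdet : G₀.det ≠ 0 := by
      intro h0
      obtain ⟨c, hc0, hc⟩ := (Matrix.exists_mulVec_eq_zero_iff).mpr h0
      apply hc0
      have hsum : ∑ j, c j • g₀ j = 0 := by
        funext i
        have := congrFun hc i
        simpa [Matrix.mulVec, dotProduct, Finset.sum_apply, mul_comm, hG₀] using this
      exact funext (Fintype.linearIndependent_iff.mp hli c hsum)
    -- quotient is finite
    have hfinQ : Finite ((Fin N → ℤ) ⧸ K) := by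
      haveI : AddGroup.FG ((Fin N → ℤ) ⧸ K) :=
        Module.Finite.iff_addGroup_fg.mp inferInstance
      apply AddCommGroup.finite_of_fg_torsion
      intro a
      obtain ⟨y, rfl⟩ := Submodule.mkQ_surjective K a
      rw [isOfFinAddOrder_iff_nsmul_eq_zero]
      refine ⟨G₀.det.natAbs, Int.natAbs_pos.mpr hdet, ?_⟩
      have h1 : (G₀.det.natAbs : ℤ) • y ∈ K := by
        have hdy : G₀.det • y ∈ K := by
          have : G₀.det • y = G₀ *ᵥ (G₀.adjugate *ᵥ y) := by
            rw [Matrix.mulVec_mulVec, Matrix.mul_adjugate, Matrix.smul_mulVec,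
              Matrix.one_mulVec]
          rw [this]
          exact mulVec_mem_of_cols K g₀ hg₀K _
        rcases Int.natAbs_eq G₀.det with h | h
        · rw [← h]; exact hdy
        · have h2 : (G₀.det.natAbs : ℤ) = -G₀.det := by omega
          rw [h2, neg_smul]
          exact neg_mem hdy
      rw [← map_nsmul (Submodule.mkQ K), Submodule.mkQ_apply, Submodule.Quotient.mk_eq_zero]
      rwa [natCast_zsmul] at h1
    have hs' : s = -1 ∨ s = 1 := by
      rcases hs with h | h | h
      · left; exact h
      · exfalso; haveI := hsK.mp h; haveI := hfinQ
        exact not_finite ((Fin N → ℤ) ⧸ K)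
      · right; exact h
    have hsgn01 : G₀.det.sign = 1 ∨ G₀.det.sign = -1 := by
      rcases lt_or_gt_of_ne hdet with h | h
      · right; rwa [Int.sign_eq_neg_one_iff_neg]
      · left; rwa [Int.sign_eq_one_iff_pos]
    by_cases hsgn : G₀.det.sign = -s
    · exact ⟨g₀, hspan₀, hsgn⟩
    · set j0 : Fin N := ⟨0, hN⟩
      refine ⟨Function.update g₀ j0 (-(g₀ j0)), ?_, ?_⟩
      · rw [span_update_neg]; exact hspan₀
      · have hmat : (Matrix.of fun i j => Function.update g₀ j0 (-(g₀ j0)) j i) =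
            G₀.updateCol j0 ((-1 : ℤ) • fun i' => G₀ i' j0) := by
          ext i j
          rw [Matrix.updateCol_apply]
          simp only [Matrix.of_apply, Function.update_apply]
          rcases eq_or_ne j j0 with rfl | hj
          · simp [hG₀]
          · simp [hj, hG₀]
        rw [hmat, Matrix.det_updateCol_smul, Matrix.updateCol_eq_self, neg_one_mul,
          Int.sign_neg]
        rcases hsgn01 with h | h <;> rcases hs' with h' | h' <;>
          rw [h, h'] at hsgn ⊢ <;> omega
  · -- not full rank
    have hkltN : k < N := lt_of_le_of_ne hkN hk
    have hinf : Infinite ((Fin N → ℤ) ⧸ K) := by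
      by_contra hI
      haveI hfin : Finite ((Fin N → ℤ) ⧸ K) := not_infinite_iff_finite.mp hI
      have hd : (Nat.card ((Fin N → ℤ) ⧸ K) : ℤ) ≠ 0 := by
        have := Nat.card_pos (α := (Fin N → ℤ) ⧸ K)
        exact_mod_cast this.ne'
      have hmem : ∀ y : Fin N → ℤ, (Nat.card ((Fin N → ℤ) ⧸ K) : ℤ) • y ∈ K := by
        intro y
        have h0 : (Nat.card ((Fin N → ℤ) ⧸ K)) • (Submodule.mkQ K y) = 0 :=
          card_nsmul_eq_zero'
        rw [← map_nsmul (Submodule.mkQ K), Submodule.mkQ_apply,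
          Submodule.Quotient.mk_eq_zero] at h0
        rwa [natCast_zsmul]
      let φ : (Fin N → ℤ) →ₗ[ℤ] K :=
        { toFun := fun y => ⟨(Nat.card ((Fin N → ℤ) ⧸ K) : ℤ) • y, hmem y⟩
          map_add' := fun a c => by ext i; simp; ring
          map_smul' := fun r a => by ext i; simp; ring }
      have hφ : Function.Injective φ := by
        intro a c hac
        have h1 : (Nat.card ((Fin N → ℤ) ⧸ K) : ℤ) • a
            = (Nat.card ((Fin N → ℤ) ⧸ K) : ℤ) • c := congrArg Subtype.val hac
        exact smul_right_injective _ hd h1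
      have hle := LinearMap.finrank_le_finrank_of_injective hφ
      rw [Module.finrank_fintype_fun_eq_card, Fintype.card_fin] at hle
      have hkK : Module.finrank ℤ K = k := by
        rw [Module.finrank_eq_card_basis b, Fintype.card_fin]
      omega
    have hs0 : s = 0 := hsK.mpr hinf
    refine ⟨fun j => if h : (j : ℕ) < k then (b ⟨j, h⟩ : Fin N → ℤ) else 0, ?_, ?_⟩
    · apply le_antisymm
      · rw [span_le]
        rintro _ ⟨j, rfl⟩
        by_cases h : (j : ℕ) < k
        · simp only [dif_pos h]; exact (b ⟨j, h⟩).2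
        · simp only [dif_neg h]; exact K.zero_mem
      · refine le_trans (le_of_eq (span_range_coe_basis K b).symm) ?_
        rw [span_le]
        rintro _ ⟨i, rfl⟩
        have h : ((⟨(i : ℕ), lt_of_lt_of_le i.isLt hkN⟩ : Fin N) : ℕ) < k := i.isLt
        have heq : (fun j : Fin N => if h : (j : ℕ) < k then (b ⟨j, h⟩ : Fin N → ℤ) else 0)
              ⟨(i : ℕ), lt_of_lt_of_le i.isLt hkN⟩ = (b i : Fin N → ℤ) := by
          simp only [dif_pos h]
        have hmem : (fun j : Fin N => if h : (j : ℕ) < k then (b ⟨j, h⟩ : Fin N → ℤ) else 0)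
              ⟨(i : ℕ), lt_of_lt_of_le i.isLt hkN⟩ ∈
            span ℤ (range fun j : Fin N =>
              if h : (j : ℕ) < k then (b ⟨j, h⟩ : Fin N → ℤ) else 0) :=
          subset_span ⟨_, rfl⟩
        rw [heq] at hmem
        exact hmem
    · have hdet0 : (Matrix.of fun i j =>
          (fun j' : Fin N => if h : (j' : ℕ) < k then (b ⟨j', h⟩ : Fin N → ℤ) else 0) j i).det
          = 0 := by
        apply Matrix.det_eq_zero_of_column_eq_zero ⟨k, hkltN⟩
        intro i
        simp
      rw [hdet0, hs0]
      rfl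

theorem stmt18 (F : Type) [AddCommGroup F] [AddGroup.FG F]
    (u : F) (s : ℤ) (hs : s = -1 ∨ s = 0 ∨ s = 1)
    (hsF : s = 0 ↔ Infinite F) :
    ∃ (n : ℕ) (A : Matrix (Fin n) (Fin n) ℤ),
      (∀ i j, 0 ≤ A i j) ∧
      (∀ i j, ∃ m : ℕ, 1 ≤ m ∧ 0 < (A ^ m) i j) ∧
      (1 - A).det.sign = s ∧
      ∃ Φ : ((Fin n → ℤ) ⧸ LinearMap.range (Matrix.toLin' (1 - Aᵀ))) ≃+ F,
        Φ (Submodule.Quotient.mk fun _ => 1) = u := by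
  obtain ⟨N0, L, hLspan, hLsum, x, hxneg, hxL⟩ := lemA F u
  set ρ : (Fin (N0+1) → ℤ) →ₗ[ℤ] F := Fintype.linearCombination ℤ L with hρdef
  have hρapp : ∀ y : Fin (N0+1) → ℤ, ρ y = ∑ i, y i • L i := fun y => rfl
  have hρsurj : Function.Surjective ρ := by
    rw [← LinearMap.range_eq_top, hρdef, Fintype.range_linearCombination, hLspan]
  set K := LinearMap.ker ρ with hKdef
  have hsK : s = 0 ↔ Infinite ((Fin (N0+1) → ℤ) ⧸ K) := by
    rw [hsF]
    exact (Equiv.infinite_iff (ρ.quotKerEquivOfSurjective hρsurj).toEquiv).symm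
  obtain ⟨g, hgspan, hgdet⟩ := lemB (N0+1) (Nat.succ_pos _) K s hs hsK
  have hgK : ∀ j, g j ∈ K := fun j => hgspan ▸ subset_span ⟨j, rfl⟩
  have hxK : x ∈ K := by
    rw [hKdef, LinearMap.mem_ker, hρapp]
    exact hxL
  -- the data
  set v' : Fin ((N0+1) + 1) → ℤ := Fin.snoc x (-1) with hv'def
  have hv'neg : ∀ i, v' i ≤ -1 := by
    intro i
    induction i using Fin.lastCases with
    | last => simp [hv'def]
    | cast i => rw [hv'def, Fin.snoc_castSucc]; exact hxneg i
  set kf : Fin (N0+1) → ℤ := fun j => 1 + ∑ i, |g j i| with hkfdef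
  have hkfapp : ∀ j, kf j = 1 + ∑ i, |g j i| := fun j => rfl
  have hkf1 : ∀ j, 1 ≤ kf j := by
    intro j
    have h0 : (0:ℤ) ≤ ∑ i, |g j i| := Finset.sum_nonneg fun i _ => abs_nonneg _
    rw [hkfapp]; omega
  have hgbd : ∀ j i, g j i ≤ kf j - 1 := by
    intro j i
    have h1 : |g j i| ≤ ∑ i', |g j i'| :=
      Finset.single_le_sum (fun i' _ => abs_nonneg (g j i')) (Finset.mem_univ i)
    have h2 : g j i ≤ |g j i| := le_abs_self _
    rw [hkfapp]; omega
  set col : Fin ((N0+1) + 1) → (Fin ((N0+1) + 1) → ℤ) :=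
    Fin.snoc (fun j => (Fin.snoc (g j) 0 : Fin ((N0+1) + 1) → ℤ) + kf j • v') v' with hcoldef
  have hcol_last : col (Fin.last (N0+1)) = v' := by rw [hcoldef, Fin.snoc_last]
  have hcol_cast : ∀ j : Fin (N0+1),
      col (Fin.castSucc j) = (Fin.snoc (g j) 0 : Fin ((N0+1) + 1) → ℤ) + kf j • v' := by
    intro j; rw [hcoldef, Fin.snoc_castSucc]
  set M : Matrix (Fin ((N0+1) + 1)) (Fin ((N0+1) + 1)) ℤ := Matrix.of (fun i j => col j i) with hMdef
  have hMapp : ∀ i j, M i j = col j i := fun i j => rfl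
  have hMneg : ∀ i j, M i j ≤ -1 := by
    intro i j
    rw [hMapp]
    induction j using Fin.lastCases with
    | last => rw [hcol_last]; exact hv'neg i
    | cast j =>
      rw [hcol_cast]
      have h1 : kf j * v' i ≤ kf j * (-1) :=
        mul_le_mul_of_nonneg_left (hv'neg i) (by linarith [hkf1 j])
      have h2 : (Fin.snoc (g j) 0 : Fin ((N0+1) + 1) → ℤ) i ≤ kf j - 1 := by
        induction i using Fin.lastCases with
        | last => rw [Fin.snoc_last]; linarith [hkf1 j]
        | cast i => rw [Fin.snoc_castSucc]; exact hgbd j i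
      have h3 : ((Fin.snoc (g j) 0 : Fin ((N0+1) + 1) → ℤ) + kf j • v') i
          = (Fin.snoc (g j) 0 : Fin ((N0+1) + 1) → ℤ) i + kf j * v' i := by
        simp [Pi.add_apply]
      rw [h3]
      linarith
  refine ⟨(N0+1) + 1, 1 - Mᵀ, ?_, ?_, ?_, ?_⟩
  · intro i j
    have := hMneg j i
    simp only [Matrix.sub_apply, Matrix.one_apply, Matrix.transpose_apply]
    split <;> omega
  · intro i j
    refine ⟨1, le_refl 1, ?_⟩
    rw [pow_one]
    have := hMneg j i
    simp only [Matrix.sub_apply, Matrix.one_apply, Matrix.transpose_apply]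
    split <;> omega
  · -- determinant sign
    have h1A : (1 : Matrix (Fin (N0+1+1)) (Fin (N0+1+1)) ℤ) - (1 - Mᵀ) = Mᵀ :=
      sub_sub_cancel 1 Mᵀ
    rw [h1A, Matrix.det_transpose]
    set G : Matrix (Fin (N0+1)) (Fin (N0+1)) ℤ := Matrix.of fun i j => g j i with hGdef
    set Pc : Fin (N0+1+1) → (Fin (N0+1+1) → ℤ) :=
      Fin.snoc (fun j => (Fin.snoc (g j) 0 : Fin (N0+1+1) → ℤ)) v' with hPcdef
    set P : Matrix (Fin (N0+1+1)) (Fin (N0+1+1)) ℤ := Matrix.of fun i j => Pc j i with hPdef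
    set kk : Fin (N0+1+1) → ℤ := Fin.snoc kf 0 with hkkdef
    set E : Matrix (Fin (N0+1+1)) (Fin (N0+1+1)) ℤ :=
      Matrix.of (fun i j => if i = Fin.last (N0+1) then kk j else 0) with hEdef
    have hPapp : ∀ i j, P i j = Pc j i := fun _ _ => rfl
    have hEapp : ∀ i j, E i j = if i = Fin.last (N0+1) then kk j else 0 := fun _ _ => rfl
    have hP_last : ∀ i, P i (Fin.last (N0+1)) = v' i := by
      intro i; rw [hPapp, hPcdef, Fin.snoc_last]
    have hP_cast : ∀ i (j : Fin (N0+1)),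
        P i (Fin.castSucc j) = (Fin.snoc (g j) 0 : Fin (N0+1+1) → ℤ) i := by
      intro i j; rw [hPapp, hPcdef, Fin.snoc_castSucc]
    have hkk_last : kk (Fin.last (N0+1)) = 0 := by rw [hkkdef, Fin.snoc_last]
    have hkk_cast : ∀ j : Fin (N0+1), kk (Fin.castSucc j) = kf j := by
      intro j; rw [hkkdef, Fin.snoc_castSucc]
    have hPE : ∀ i j, (P * E) i j = v' i * kk j := by
      intro i j
      rw [Matrix.mul_apply]
      have hterm : ∀ l, P i l * E l j = if l = Fin.last (N0+1) then P i l * kk j else 0 := by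
        intro l; rw [hEapp]; by_cases h : l = Fin.last (N0+1) <;> simp [h]
      simp_rw [hterm]
      rw [Finset.sum_ite_eq' Finset.univ (Fin.last (N0+1)) (fun l => P i l * kk j)]
      rw [if_pos (Finset.mem_univ _), hP_last]
    have hMPU : M = P * (1 + E) := by
      ext i j
      rw [Matrix.mul_add, Matrix.mul_one, Matrix.add_apply, hPE, hMapp]
      induction j using Fin.lastCases with
      | last => rw [hcol_last, hP_last, hkk_last, mul_zero, add_zero]
      | cast j =>
        rw [hcol_cast, hP_cast, hkk_cast, Pi.add_apply, Pi.smul_apply, smul_eq_mul]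
        ring
    have hdetU : (1 + E).det = 1 := by
      have htri : (1 + E).BlockTriangular OrderDual.toDual := by
        intro i j hij
        have hij' : i < j := hij
        have hine : i ≠ j := ne_of_lt hij'
        have hlast : i ≠ Fin.last (N0+1) := Fin.ne_last_of_lt hij'
        rw [Matrix.add_apply, Matrix.one_apply_ne hine, hEapp, if_neg hlast, add_zero]
      rw [Matrix.det_of_lowerTriangular _ htri]
      apply Finset.prod_eq_one
      intro i _
      rw [Matrix.add_apply, Matrix.one_apply_eq, hEapp]
      by_cases h : i = Fin.last (N0+1)
      · subst h; rw [if_pos rfl, hkk_last, add_zero]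
      · rw [if_neg h, add_zero]
    have he1 : ∀ i : Fin (N0+1), finSumFinEquiv (Sum.inl i) = Fin.castSucc i := by
      intro i; rfl
    have he2 : finSumFinEquiv (Sum.inr (0 : Fin 1)) = Fin.last (N0+1) := by
      apply Fin.ext; simp
    have hsub : P.submatrix (finSumFinEquiv (m := N0+1) (n := 1)) finSumFinEquiv =
        Matrix.fromBlocks G (Matrix.of fun i (_ : Fin 1) => x i) 0
          (Matrix.of fun (_ : Fin 1) (_ : Fin 1) => (-1:ℤ)) := by
      ext i j
      rcases i with i | i <;> rcases j with j | j
      · show P (finSumFinEquiv (Sum.inl i)) (finSumFinEquiv (Sum.inl j)) = G i j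
        rw [he1, he1, hP_cast, Fin.snoc_castSucc]
        rw [hGdef]
        rfl
      · show P (finSumFinEquiv (Sum.inl i)) (finSumFinEquiv (Sum.inr j)) = x i
        have hj : j = 0 := Subsingleton.elim _ _
        subst hj
        rw [he1, he2, hP_last, hv'def, Fin.snoc_castSucc]
      · show P (finSumFinEquiv (Sum.inr i)) (finSumFinEquiv (Sum.inl j)) = 0
        have hi : i = 0 := Subsingleton.elim _ _
        subst hi
        rw [he2, he1, hP_cast, Fin.snoc_last]
      · show P (finSumFinEquiv (Sum.inr i)) (finSumFinEquiv (Sum.inr j)) = -1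
        have hi : i = 0 := Subsingleton.elim _ _
        have hj : j = 0 := Subsingleton.elim _ _
        subst hi; subst hj
        rw [he2, hP_last, hv'def, Fin.snoc_last]
    have hdetP : P.det = -G.det := by
      rw [← Matrix.det_submatrix_equiv_self finSumFinEquiv P, hsub,
        Matrix.det_fromBlocks_zero₂₁]
      have hD : (Matrix.of fun (_ : Fin 1) (_ : Fin 1) => (-1:ℤ)).det = -1 := by
        rw [Matrix.det_fin_one]; rfl
      rw [hD]; ring
    rw [hMPU, Matrix.det_mul, hdetU, mul_one, hdetP, Int.sign_neg, hgdet, neg_neg]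
  · -- the isomorphism
    set L' : Fin (N0+1+1) → F := Fin.snoc L 0 with hL'def
    set ρ' : (Fin (N0+1+1) → ℤ) →ₗ[ℤ] F := Fintype.linearCombination ℤ L' with hρ'def
    have hρ'app : ∀ y, ρ' y = ∑ i, y i • L' i := fun y => rfl
    have hL'cast : ∀ i : Fin (N0+1), L' (Fin.castSucc i) = L i := by
      intro i; rw [hL'def, Fin.snoc_castSucc]
    have hL'last : L' (Fin.last (N0+1)) = 0 := by rw [hL'def, Fin.snoc_last]
    have hsnocρ : ∀ y : Fin (N0+1) → ℤ, ρ' (Fin.snoc y 0) = ρ y := by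
      intro y
      rw [hρ'app, Fin.sum_univ_castSucc, hρapp, hL'last, smul_zero, add_zero]
      apply Finset.sum_congr rfl
      intro i _
      rw [hL'cast, Fin.snoc_castSucc]
    have hρ'v' : ρ' v' = 0 := by
      rw [hρ'app, Fin.sum_univ_castSucc, hL'last, smul_zero, add_zero]
      have h1 : ∀ i : Fin (N0+1), v' (Fin.castSucc i) • L' (Fin.castSucc i) = x i • L i := by
        intro i; rw [hL'cast, hv'def, Fin.snoc_castSucc]
      simp only [h1]
      exact hxL
    have hρ'surj : Function.Surjective ρ' := by
      rw [← LinearMap.range_eq_top, hρ'def, Fintype.range_linearCombination]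
      rw [eq_top_iff, ← hLspan]
      apply Submodule.span_mono
      rintro _ ⟨i, rfl⟩
      exact ⟨Fin.castSucc i, hL'cast i⟩
    have hAT : (1 : Matrix (Fin (N0+1+1)) (Fin (N0+1+1)) ℤ) - (1 - Mᵀ)ᵀ = M := by
      rw [Matrix.transpose_sub, Matrix.transpose_one, Matrix.transpose_transpose]
      exact sub_sub_cancel 1 M
    have hrange : LinearMap.range (Matrix.toLin'
        ((1 : Matrix (Fin (N0+1+1)) (Fin (N0+1+1)) ℤ) - (1 - Mᵀ)ᵀ)) = LinearMap.ker ρ' := by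
      rw [hAT, Matrix.range_toLin']
      have hMT2 : M.col = col := rfl
      rw [hMT2]
      apply le_antisymm
      · rw [Submodule.span_le]
        rintro _ ⟨j, rfl⟩
        rw [SetLike.mem_coe, LinearMap.mem_ker]
        induction j using Fin.lastCases with
        | last => rw [hcol_last]; exact hρ'v'
        | cast j =>
          rw [hcol_cast, map_add, _root_.map_smul, hsnocρ, hρ'v', smul_zero, add_zero]
          have := hgK j
          rw [hKdef, LinearMap.mem_ker] at this
          exact this
      · intro y hy
        have hy0 : ρ' y = 0 := LinearMap.mem_ker.mp hy
        set y₀ : Fin (N0+1) → ℤ := fun i => y (Fin.castSucc i) with hy₀def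
        have hy₀K : y₀ ∈ K := by
          rw [hKdef, LinearMap.mem_ker]
          have h2 : ρ' y = ρ y₀ := by
            rw [hρ'app, hρapp, Fin.sum_univ_castSucc, hL'last, smul_zero, add_zero]
            apply Finset.sum_congr rfl
            intro i _
            rw [hL'cast]
          rw [← h2]
          exact hy0
        have hsnocS : ∀ w ∈ K, (Fin.snoc w 0 : Fin (N0+1+1) → ℤ) ∈ span ℤ (range col) := by
          intro w hw
          rw [← hgspan] at hw
          induction hw using Submodule.span_induction with
          | mem z hz =>
            obtain ⟨j, rfl⟩ := hz
            have heq : (Fin.snoc (g j) 0 : Fin (N0+1+1) → ℤ)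
                = col (Fin.castSucc j) - kf j • col (Fin.last (N0+1)) := by
              rw [hcol_cast, hcol_last]; abel
            rw [heq]
            exact sub_mem (subset_span ⟨_, rfl⟩) (smul_mem _ _ (subset_span ⟨_, rfl⟩))
          | zero =>
            have heq : (Fin.snoc (0 : Fin (N0+1) → ℤ) 0 : Fin (N0+1+1) → ℤ) = 0 := by
              funext i
              induction i using Fin.lastCases with
              | last => rw [Fin.snoc_last]; rfl
              | cast i => rw [Fin.snoc_castSucc]; rfl
            rw [heq]; exact zero_mem _
          | add a b ha hb iha ihb =>
            have heq : (Fin.snoc (a + b) 0 : Fin (N0+1+1) → ℤ)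
                = (Fin.snoc a 0 : Fin (N0+1+1) → ℤ) + Fin.snoc b 0 := by
              funext i
              induction i using Fin.lastCases with
              | last => simp [Fin.snoc_last]
              | cast i => simp [Fin.snoc_castSucc]
            rw [heq]; exact add_mem iha ihb
          | smul r a ha iha =>
            have heq : (Fin.snoc (r • a) 0 : Fin (N0+1+1) → ℤ) = r • Fin.snoc a 0 := by
              funext i
              induction i using Fin.lastCases with
              | last => simp [Fin.snoc_last]
              | cast i => simp [Fin.snoc_castSucc]
            rw [heq]; exact smul_mem _ _ iha
        have hv'S : v' ∈ span ℤ (range col) := by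
          have h : col (Fin.last (N0+1)) ∈ span ℤ (range col) := subset_span ⟨_, rfl⟩
          rwa [hcol_last] at h
        have hlastS : (Fin.snoc (0 : Fin (N0+1) → ℤ) 1 : Fin (N0+1+1) → ℤ)
            ∈ span ℤ (range col) := by
          have heq : (Fin.snoc (0 : Fin (N0+1) → ℤ) 1 : Fin (N0+1+1) → ℤ)
              = (Fin.snoc x 0 : Fin (N0+1+1) → ℤ) - v' := by
            funext i
            induction i using Fin.lastCases with
            | last => rw [Pi.sub_apply, hv'def]; simp [Fin.snoc_last]
            | cast i => rw [Pi.sub_apply, hv'def]; simp [Fin.snoc_castSucc]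
          rw [heq]
          exact sub_mem (hsnocS x hxK) hv'S
        have hdecomp : y = (Fin.snoc y₀ 0 : Fin (N0+1+1) → ℤ)
            + (y (Fin.last (N0+1))) • (Fin.snoc (0 : Fin (N0+1) → ℤ) 1 : Fin (N0+1+1) → ℤ) := by
          funext i
          induction i using Fin.lastCases with
          | last => simp [Fin.snoc_last]
          | cast i => simp [Fin.snoc_castSucc, hy₀def]
        rw [hdecomp]
        exact add_mem (hsnocS y₀ hy₀K) (smul_mem _ _ hlastS)
    set q : ((Fin (N0+1+1) → ℤ) ⧸ LinearMap.range (Matrix.toLin'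
        ((1 : Matrix (Fin (N0+1+1)) (Fin (N0+1+1)) ℤ) - (1 - Mᵀ)ᵀ))) →ₗ[ℤ] F :=
      Submodule.liftQ _ ρ' (le_of_eq hrange) with hqdef
    have hqinj : Function.Injective q := by
      rw [← LinearMap.ker_eq_bot, hqdef]
      exact Submodule.ker_liftQ_eq_bot _ _ _ (le_of_eq hrange.symm)
    have hqsurj : Function.Surjective q := by
      intro z
      obtain ⟨w, hw⟩ := hρ'surj z
      refine ⟨Submodule.Quotient.mk w, ?_⟩
      rw [hqdef, Submodule.liftQ_apply]
      exact hw
    refine ⟨(LinearEquiv.ofBijective q ⟨hqinj, hqsurj⟩).toAddEquiv, ?_⟩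
    show q (Submodule.Quotient.mk fun _ => 1) = u
    rw [hqdef, Submodule.liftQ_apply]
    rw [hρ'app, Fin.sum_univ_castSucc, hL'last, smul_zero, add_zero]
    have h1 : ∀ i : Fin (N0+1), (1 : ℤ) • L' (Fin.castSucc i) = L i := by
      intro i; rw [one_smul, hL'cast]
    simp only [h1]
    exact hLsum
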